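/- arXiv:2011.12798 — 2 statements merged into one kernel-verified Lean document; each statement's English description precedes it below -/
import Mathlib

section
/- The unique steady state x* of the single-tray ODE n x' = L(x_in − x) + V(y_in − y(x)) is globally asymptotically stable on [0,1]: for any initial condition in [0,1], the solution converges to x* as t → ∞. -/
noncomputable def yeq (α x : ℝ) : ℝ := α * x / (1 + (α - 1) * x)

set_option maxHeartbeats 2000000 in
theorem steady_state_gas (α n L V xin yin xstar : ℝ) (hα : 1 < α)
    (hn : 0 < n) (hL : 0 < L) (hV : 0 < V)
    (hxin : xin ∈ Set.Icc (0:ℝ) 1) (hyin : yin ∈ Set.Icc (0:ℝ) 1)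
    (hstar : xstar ∈ Set.Icc (0:ℝ) 1)
    (hzero : L * (xin - xstar) + V * (yin - yeq α xstar) = 0)
    (x : ℝ → ℝ)
    (hx : ∀ t, HasDerivAt x ((L * (xin - x t) + V * (yin - yeq α (x t))) / n) t)
    (h0 : x 0 ∈ Set.Icc (0:ℝ) 1) :
    Filter.Tendsto x Filter.atTop (nhds xstar) := by
  obtain ⟨hs0, hs1⟩ := hstar
  obtain ⟨h00, h01⟩ := h0
  have hα1 : (0:ℝ) < α - 1 := by linarith
  obtain ⟨c, hc_def⟩ : ∃ c : ℝ, c = -(1 / (α - 1)) := ⟨_, rfl⟩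
  have hc : c < 0 := by
    have h1 : (0:ℝ) < 1 / (α - 1) := by positivity
    rw [hc_def]; linarith
  have hmc : (α - 1) * c = -1 := by
    rw [hc_def]; field_simp
  obtain ⟨F, hF_def⟩ : ∃ F : ℝ → ℝ,
      F = fun u => (L * (xin - u) + V * (yin - yeq α u)) / n := ⟨_, rfl⟩
  have hxkd : ∀ t, HasDerivAt x (F (x t)) t := by
    intro t; rw [hF_def]; exact hx t
  have hcontx : Continuous x := by
    have : Differentiable ℝ x := fun t => (hxkd t).differentiableAt
    exact this.continuous
  -- denominator positivity
  have hden : ∀ u, c < u → 0 < 1 + (α - 1) * u := by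
    intro u hu
    have h2 := mul_lt_mul_of_pos_left hu hα1
    rw [hmc] at h2
    linarith
  -- strict antitonicity of F on Ioi c
  have hFanti : StrictAntiOn F (Set.Ioi c) := by
    intro u1 hu1 u2 hu2 h12
    have hd1 : 0 < 1 + (α - 1) * u1 := hden u1 hu1
    have hd2 : 0 < 1 + (α - 1) * u2 := hden u2 hu2
    have hy : yeq α u1 < yeq α u2 := by
      rw [yeq, yeq, div_lt_div_iff₀ hd1 hd2]
      nlinarith
    have hnum : L * (xin - u2) + V * (yin - yeq α u2)
        < L * (xin - u1) + V * (yin - yeq α u1) := by nlinarith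
    simp only [hF_def]
    gcongr
  have hstarmem : xstar ∈ Set.Ioi c := by
    simp only [Set.mem_Ioi]; linarith
  have hFstar : F xstar = 0 := by
    rw [hF_def]; simp only [hzero, zero_div]
  -- F positive below xstar, negative above (within Ioi c)
  have hFpos : ∀ u, c < u → u < xstar → 0 < F u := by
    intro u hu hux
    have := hFanti (Set.mem_Ioi.mpr hu) hstarmem hux
    rw [hFstar] at this
    exact this
  have hFneg : ∀ u, xstar < u → F u < 0 := by
    intro u hu
    have := hFanti hstarmem (Set.mem_Ioi.mpr (by linarith : c < u)) hu
    rw [hFstar] at this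
    exact this
  -- lower bound for the trajectory: a ≤ x t for t ≥ 0
  obtain ⟨a, ha_def⟩ : ∃ a : ℝ, a = min (x 0) xstar := ⟨_, rfl⟩
  have ha0 : 0 ≤ a := ha_def ▸ le_min h00 hs0
  have hax0 : a ≤ x 0 := ha_def ▸ min_le_left _ _
  have haxs : a ≤ xstar := ha_def ▸ min_le_right _ _
  have hlow : ∀ t, 0 ≤ t → a ≤ x t := by
    intro t1 ht1
    by_contra hlt
    push_neg at hlt
    obtain ⟨v, hv_def⟩ : ∃ v : ℝ, v = (max c (x t1) + a) / 2 := ⟨_, rfl⟩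
    have hmaxlt : max c (x t1) < a := max_lt (lt_of_lt_of_le hc ha0) hlt
    have hva : v < a := by rw [hv_def]; linarith
    have hcv : c < v := by
      have h1 := le_max_left c (x t1); rw [hv_def]; linarith
    have hx1v : x t1 < v := by
      have h1 := le_max_right c (x t1); rw [hv_def]; linarith
    obtain ⟨S, hS_def⟩ : ∃ S : Set ℝ, S = Set.Icc 0 t1 ∩ x ⁻¹' Set.Iic v := ⟨_, rfl⟩
    have hSmem : ∀ t, t ∈ S ↔ (0 ≤ t ∧ t ≤ t1) ∧ x t ≤ v := by
      intro t; rw [hS_def]; rfl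
    have hSne : t1 ∈ S := (hSmem t1).mpr ⟨⟨ht1, le_rfl⟩, hx1v.le⟩
    have hSclosed : IsClosed S := hS_def ▸ isClosed_Icc.inter (isClosed_Iic.preimage hcontx)
    have hSbdd : BddBelow S := ⟨0, fun t ht => ((hSmem t).mp ht).1.1⟩
    obtain ⟨τ, hτ_def⟩ : ∃ τ : ℝ, τ = sInf S := ⟨_, rfl⟩
    have hτS : τ ∈ S := hτ_def ▸ hSclosed.csInf_mem ⟨t1, hSne⟩ hSbdd
    obtain ⟨⟨hτ0, hτt1⟩, hxτ⟩ := (hSmem τ).mp hτS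
    have hτpos : 0 < τ := by
      rcases lt_or_eq_of_le hτ0 with h | h
      · exact h
      · exfalso; rw [← h] at hxτ; linarith
    have hbefore : ∀ t, 0 ≤ t → t < τ → v < x t := by
      intro t ht htτ
      by_contra hcon
      push_neg at hcon
      have h1 : t ∈ S := (hSmem t).mpr ⟨⟨ht, le_trans htτ.le hτt1⟩, hcon⟩
      have h2 := csInf_le hSbdd h1
      rw [← hτ_def] at h2
      linarith
    obtain ⟨T, hT_def⟩ : ∃ T : Set ℝ, T = Set.Icc 0 τ ∩ x ⁻¹' Set.Ici a := ⟨_, rfl⟩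
    have hTmem : ∀ t, t ∈ T ↔ (0 ≤ t ∧ t ≤ τ) ∧ a ≤ x t := by
      intro t; rw [hT_def]; rfl
    have hTne : (0:ℝ) ∈ T := (hTmem 0).mpr ⟨⟨le_rfl, hτ0⟩, hax0⟩
    have hTclosed : IsClosed T := hT_def ▸ isClosed_Icc.inter (isClosed_Ici.preimage hcontx)
    have hTbdd : BddAbove T := ⟨τ, fun t ht => ((hTmem t).mp ht).1.2⟩
    obtain ⟨σ, hσ_def⟩ : ∃ σ : ℝ, σ = sSup T := ⟨_, rfl⟩
    have hσT : σ ∈ T := hσ_def ▸ hTclosed.csSup_mem ⟨0, hTne⟩ hTbdd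
    obtain ⟨⟨hσ0, hστ'⟩, hxσ⟩ := (hTmem σ).mp hσT
    have hστ : σ < τ := by
      rcases lt_or_eq_of_le hστ' with h | h
      · exact h
      · exfalso; rw [h] at hxσ; linarith
    have hafter : ∀ t, σ < t → t ≤ τ → x t < a := by
      intro t hσt htτ
      by_contra hcon
      push_neg at hcon
      have h1 : t ∈ T := (hTmem t).mpr ⟨⟨le_trans hσ0 hσt.le, htτ⟩, hcon⟩
      have h2 := le_csSup hTbdd h1
      rw [← hσ_def] at h2
      linarith
    obtain ⟨ξ, hξ, hslope⟩ := exists_hasDerivAt_eq_slope x (fun t => F (x t)) hστ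
      hcontx.continuousOn (fun s _ => hxkd s)
    have hξv : v < x ξ := hbefore ξ (le_trans hσ0 hξ.1.le) hξ.2
    have hξa : x ξ < a := hafter ξ hξ.1 hξ.2.le
    have hFξpos : 0 < F (x ξ) := hFpos (x ξ) (by linarith) (by linarith)
    have hslneg : (x τ - x σ) / (τ - σ) < 0 :=
      div_neg_of_neg_of_pos (by linarith) (by linarith)
    rw [hslope] at hFξpos
    linarith
  -- Lyapunov function W t = (x t - xstar)^2
  obtain ⟨W, hW_def⟩ : ∃ W : ℝ → ℝ, W = fun t => (x t - xstar) ^ 2 := ⟨_, rfl⟩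
  have hWd : ∀ t, HasDerivAt W (2 * (x t - xstar) * F (x t)) t := by
    intro t
    have h1 : HasDerivAt (fun t => x t - xstar) (F (x t)) t := (hxkd t).sub_const xstar
    have h2 := h1.fun_pow 2
    rw [hW_def]
    simpa using h2
  have hWnonneg : ∀ t, 0 ≤ W t := by
    intro t; rw [hW_def]; exact sq_nonneg _
  have hW'le : ∀ t, 0 ≤ t → 2 * (x t - xstar) * F (x t) ≤ 0 := by
    intro t ht
    rcases lt_trichotomy (x t) xstar with h | h | h
    · have hFp : 0 < F (x t) := hFpos (x t) (by linarith [hlow t ht]) h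
      nlinarith
    · rw [h]; ring_nf; simp
    · have hFn : F (x t) < 0 := hFneg (x t) h
      nlinarith
  have hWcont : Continuous W := by
    have : Differentiable ℝ W := fun t => (hWd t).differentiableAt
    exact this.continuous
  have hWanti : AntitoneOn W (Set.Ici 0) := by
    apply antitoneOn_of_deriv_nonpos (convex_Ici 0) hWcont.continuousOn
    · intro t ht
      exact (hWd t).differentiableAt.differentiableWithinAt
    · intro t ht
      rw [interior_Ici] at ht
      rw [(hWd t).deriv]
      exact hW'le t (le_of_lt ht)
  rw [Metric.tendsto_atTop]
  intro ε hε
  obtain ⟨ε', hε'_def⟩ : ∃ e : ℝ, e = min ε ((xstar - c) / 2) := ⟨_, rfl⟩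
  have hε'pos : 0 < ε' := by
    rw [hε'_def]; exact lt_min hε (by linarith)
  have hε'ε : ε' ≤ ε := hε'_def ▸ min_le_left _ _
  have hε'c : c < xstar - ε' := by
    have h1 : ε' ≤ (xstar - c) / 2 := hε'_def ▸ min_le_right _ _
    linarith
  -- there exists a time where |x t - xstar| < ε'
  have hexists : ∃ t0, 0 ≤ t0 ∧ |x t0 - xstar| < ε' := by
    by_contra hcon
    push_neg at hcon
    have hFa : 0 < F (xstar - ε') := hFpos _ hε'c (by linarith)
    have hFb : F (xstar + ε') < 0 := hFneg _ (by linarith)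
    obtain ⟨δ, hδ_def⟩ : ∃ d : ℝ, d = min (F (xstar - ε')) (-(F (xstar + ε'))) := ⟨_, rfl⟩
    have hδpos : 0 < δ := by
      rw [hδ_def]; exact lt_min hFa (by linarith)
    have hδa : δ ≤ F (xstar - ε') := hδ_def ▸ min_le_left _ _
    have hδb : δ ≤ -(F (xstar + ε')) := hδ_def ▸ min_le_right _ _
    have hbound : ∀ t, 0 ≤ t → 2 * (x t - xstar) * F (x t) ≤ -(2 * ε' * δ) := by
      intro t ht
      have habs := hcon t ht
      rcases le_or_gt (x t) (xstar - ε') with h | h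
      · have hxt : c < x t := by linarith [hlow t ht]
        have hmono : F (xstar - ε') ≤ F (x t) :=
          hFanti.antitoneOn (Set.mem_Ioi.mpr hxt) (Set.mem_Ioi.mpr hε'c) h
        nlinarith
      · have h2 : xstar + ε' ≤ x t := by
          rcases le_abs.mp habs with h4 | h4
          · linarith
          · linarith
        have hmono : F (x t) ≤ F (xstar + ε') :=
          hFanti.antitoneOn (Set.mem_Ioi.mpr (by linarith : c < xstar + ε'))
            (Set.mem_Ioi.mpr (by linarith : c < x t)) h2
        nlinarith
    -- linear decay of W: contradiction
    obtain ⟨G, hG_def⟩ : ∃ G : ℝ → ℝ, G = fun t => W t + 2 * ε' * δ * t := ⟨_, rfl⟩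
    have hGd : ∀ t, HasDerivAt G (2 * (x t - xstar) * F (x t) + 2 * ε' * δ) t := by
      intro t
      rw [hG_def]
      have h1 : HasDerivAt (fun s : ℝ => 2 * ε' * δ * s) (2 * ε' * δ) t := by
        simpa using (hasDerivAt_id t).const_mul (2 * ε' * δ)
      exact (hWd t).add h1
    have hGcont : Continuous G := by
      have : Differentiable ℝ G := fun t => (hGd t).differentiableAt
      exact this.continuous
    have hGanti : AntitoneOn G (Set.Ici 0) := by
      apply antitoneOn_of_deriv_nonpos (convex_Ici 0) hGcont.continuousOn
      · intro t ht
        exact (hGd t).differentiableAt.differentiableWithinAt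
      · intro t ht
        rw [interior_Ici] at ht
        rw [(hGd t).deriv]
        linarith [hbound t ht.le]
    have h2εδ : 0 < 2 * ε' * δ := mul_pos (mul_pos two_pos hε'pos) hδpos
    obtain ⟨T0, hT0_def⟩ : ∃ T0 : ℝ, T0 = (W 0 + 1) / (2 * ε' * δ) := ⟨_, rfl⟩
    have hT0pos : 0 < T0 := by
      rw [hT0_def]
      apply div_pos _ h2εδ
      linarith [hWnonneg 0]
    have hG0 := hGanti (Set.mem_Ici.mpr le_rfl) (Set.mem_Ici.mpr hT0pos.le) hT0pos.le
    have hGT : W T0 + 2 * ε' * δ * T0 ≤ W 0 + 2 * ε' * δ * 0 := by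
      simp only [hG_def] at hG0; exact hG0
    have hmul : 2 * ε' * δ * T0 = W 0 + 1 := by
      rw [hT0_def, mul_div_cancel₀ _ (ne_of_gt h2εδ)]
    have hWT0 : 0 ≤ W T0 := hWnonneg T0
    linarith
  obtain ⟨t0, ht0, hxt0⟩ := hexists
  refine ⟨t0, fun t ht => ?_⟩
  have hWle : W t ≤ W t0 := hWanti (Set.mem_Ici.mpr ht0) (Set.mem_Ici.mpr (le_trans ht0 ht)) ht
  have hWt0 : W t0 < ε' ^ 2 := by
    simp only [hW_def]
    have h5 := abs_lt.mp hxt0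
    nlinarith [h5.1, h5.2]
  have hsq : (x t - xstar) ^ 2 < ε' ^ 2 := by
    simp only [hW_def] at hWle hWt0
    exact lt_of_le_of_lt hWle hWt0
  have h6 := abs_lt_of_sq_lt_sq hsq hε'pos.le
  rw [Real.dist_eq]
  linarith [abs_lt.mp h6 |>.1, abs_lt.mp h6 |>.2]
end

section
/- For the two-tray coupled system n_1 x_1' = L(x_in − x_1) + V(y(x_2) − y(x_1)), n_2 x_2' = L(x_1 − x_2) + V(y_in − y(x_2)) with positive constants and y strictly increasing, the box [0,1]² is positively invariant. -/
open Set

lemma denom_pos {α x : ℝ} (hα : 1 < α) (hx : -(2 * (α - 1))⁻¹ ≤ x) :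
    (1:ℝ)/2 ≤ 1 + (α - 1) * x := by
  have h1 : (0:ℝ) < α - 1 := by linarith
  have h2 : (α - 1) * (2 * (α - 1))⁻¹ = 1/2 := by
    field_simp

  nlinarith [mul_le_mul_of_nonneg_left hx (le_of_lt h1)]

lemma yeq_sub {α x y : ℝ} (hα : 1 < α) (hx : -(2 * (α - 1))⁻¹ ≤ x) (hy : -(2 * (α - 1))⁻¹ ≤ y) :
    yeq α x - yeq α y = α * (x - y) / ((1 + (α - 1) * x) * (1 + (α - 1) * y)) := by
  have hdx : (0:ℝ) < 1 + (α - 1) * x := lt_of_lt_of_le (by norm_num) (denom_pos hα hx)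
  have hdy : (0:ℝ) < 1 + (α - 1) * y := lt_of_lt_of_le (by norm_num) (denom_pos hα hy)
  unfold yeq
  rw [div_sub_div _ _ hdx.ne' hdy.ne']
  congr 1
  ring

lemma yeq_mono {α x y : ℝ} (hα : 1 < α) (hx : -(2 * (α - 1))⁻¹ ≤ x) (hy : -(2 * (α - 1))⁻¹ ≤ y)
    (hxy : x ≤ y) : yeq α x ≤ yeq α y := by
  have h := yeq_sub hα hx hy
  have hdx : (0:ℝ) < 1 + (α - 1) * x := lt_of_lt_of_le (by norm_num) (denom_pos hα hx)
  have hdy : (0:ℝ) < 1 + (α - 1) * y := lt_of_lt_of_le (by norm_num) (denom_pos hα hy)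
  nlinarith [div_nonpos_of_nonpos_of_nonneg (by nlinarith : α * (x - y) ≤ 0) (le_of_lt (mul_pos hdx hdy))]

lemma yeq_lip {α x y : ℝ} (hα : 1 < α) (hx : -(2 * (α - 1))⁻¹ ≤ x) (hy : -(2 * (α - 1))⁻¹ ≤ y) :
    |yeq α x - yeq α y| ≤ 4 * α * |x - y| := by
  rw [yeq_sub hα hx hy, abs_div, abs_mul]
  have hdx := denom_pos hα hx
  have hdy := denom_pos hα hy
  have h4 : (1:ℝ)/4 ≤ |(1 + (α - 1) * x) * (1 + (α - 1) * y)| := by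
    rw [abs_mul, abs_of_nonneg (by linarith), abs_of_nonneg (by linarith)]
    nlinarith
  rw [div_le_iff₀ (by linarith)]
  have hαpos : (0:ℝ) < α := by linarith
  rw [abs_of_nonneg (le_of_lt hαpos)]
  nlinarith [abs_nonneg (x - y), mul_le_mul_of_nonneg_left h4 (mul_nonneg (le_of_lt hαpos) (abs_nonneg (x-y)))]

lemma yeq_zero (α : ℝ) : yeq α 0 = 0 := by simp [yeq]

lemma yeq_one {α : ℝ} (hα : 1 < α) : yeq α 1 = 1 := by
  unfold yeq; rw [mul_one]; rw [div_eq_one_iff_eq (by linarith)]; ring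
open Set Filter

noncomputable def eOut (x : ℝ) : ℝ := max (x - 1) 0 - max (-x) 0

lemma hasDerivAt_max_sq (c x : ℝ) :
    HasDerivAt (fun y => (max (y - c) 0) ^ 2) (2 * max (x - c) 0) x := by
  rcases lt_trichotomy x c with h | h | h
  · have : (fun y => (max (y - c) 0) ^ 2) =ᶠ[nhds x] fun _ => (0:ℝ) := by
      filter_upwards [eventually_lt_nhds h] with y hy
      rw [max_eq_right (by linarith)]; norm_num
    rw [max_eq_right (by linarith), mul_zero]
    exact (hasDerivAt_const x (0:ℝ)).congr_of_eventuallyEq this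
  · subst h
    rw [sub_self, max_self, mul_zero]
    rw [hasDerivAt_iff_isLittleO]
    rw [Asymptotics.isLittleO_iff]
    intro ε hε
    have : ∀ᶠ y in nhds x, |y - x| ≤ ε := by
      have := Metric.ball_mem_nhds x hε
      filter_upwards [this] with y hy
      rw [Metric.mem_ball, Real.dist_eq] at hy
      linarith [le_of_lt hy]
    filter_upwards [this] with y hy
    have h1 : (max (y - x) 0) ^ 2 ≤ |y - x| * |y - x| := by
      rcases le_or_gt (y - x) 0 with h | h
      · rw [max_eq_right h]
        nlinarith [abs_nonneg (y - x)]
      · rw [max_eq_left (le_of_lt h)]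
        have h2 : y - x ≤ |y - x| := le_abs_self _
        nlinarith [abs_nonneg (y - x)]
    have h3 : |y - x| * |y - x| ≤ ε * |y - x| := mul_le_mul_of_nonneg_right hy (abs_nonneg _)
    simp only [Real.norm_eq_abs, smul_zero, sub_zero]
    have h4 : (0:ℝ) ≤ (max (y - x) 0) ^ 2 := by positivity
    rw [sub_self, max_self]
    norm_num
    exact le_trans h1 h3
  · have : (fun y => (max (y - c) 0) ^ 2) =ᶠ[nhds x] fun y => (y - c) ^ 2 := by
      filter_upwards [eventually_gt_nhds h] with y hy
      rw [max_eq_left (by linarith)]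
    rw [max_eq_left (by linarith)]
    have hd : HasDerivAt (fun y : ℝ => (y - c) ^ 2) (2 * (x - c)) x := by
      have := ((hasDerivAt_id x).sub_const c).pow 2
      simp at this; exact this
    exact hd.congr_of_eventuallyEq this

lemma hasDerivAt_qOut (x : ℝ) :
    HasDerivAt (fun y => (max (y - 1) 0) ^ 2 + (max (-y) 0) ^ 2) (2 * eOut x) x := by
  have h1 := hasDerivAt_max_sq 1 x
  have h2 : HasDerivAt (fun y : ℝ => (max (-y) 0) ^ 2) (-(2 * max (-x) 0)) x := by
    have hneg : HasDerivAt (fun y : ℝ => -y) (-1) x := (hasDerivAt_id x).neg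
    have := (hasDerivAt_max_sq 0 (-x)).comp x hneg
    simp [mul_comm] at this; rw [mul_comm]; exact this
  have := h1.add h2
  rw [show 2 * eOut x = 2 * max (x - 1) 0 + -(2 * max (-x) 0) by unfold eOut; ring]
  exact this

lemma eOut_cases (x : ℝ) :
    (x ≤ 0 ∧ eOut x = x) ∨ (0 ≤ x ∧ x ≤ 1 ∧ eOut x = 0) ∨ (1 ≤ x ∧ eOut x = x - 1) := by
  unfold eOut
  rcases le_or_gt x 0 with h | h
  · left; exact ⟨h, by rw [max_eq_right (by linarith), max_eq_left (by linarith)]; ring⟩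
  · rcases le_or_gt x 1 with h1 | h1
    · right; left
      exact ⟨le_of_lt h, h1, by rw [max_eq_right (by linarith), max_eq_right (by linarith)]; ring⟩
    · right; right
      exact ⟨le_of_lt h1, by rw [max_eq_left (by linarith), max_eq_right (by linarith)]; ring⟩

lemma qOut_eq (x : ℝ) : (max (x - 1) 0) ^ 2 + (max (-x) 0) ^ 2 = (eOut x) ^ 2 := by
  rcases eOut_cases x with ⟨h, he⟩ | ⟨h0, h1, he⟩ | ⟨h, he⟩ <;> unfold eOut at * <;>
    [skip; skip; skip] <;>
  · rcases le_or_gt x 0 with hc | hc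
    · rw [max_eq_right (by linarith), max_eq_left (by linarith)] at *
      nlinarith [he]
    · rcases le_or_gt x 1 with hc1 | hc1
      · rw [max_eq_right (by linarith), max_eq_right (by linarith)] at *
        nlinarith [he]
      · rw [max_eq_left (by linarith), max_eq_right (by linarith)] at *
        nlinarith [he]

set_option maxHeartbeats 1600000 in
lemma key_ineq (α n₁ n₂ L V xin yin a b : ℝ) (hα : 1 < α)
    (hn₁ : 0 < n₁) (hn₂ : 0 < n₂) (hL : 0 < L) (hV : 0 < V)
    (hxin : xin ∈ Set.Icc (0:ℝ) 1) (hyin : yin ∈ Set.Icc (0:ℝ) 1)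
    (ha : -(2 * (α - 1))⁻¹ ≤ a) (hb : -(2 * (α - 1))⁻¹ ≤ b) :
    2 * eOut a * ((L * (xin - a) + V * (yeq α b - yeq α a)) / n₁)
      + 2 * eOut b * ((L * (a - b) + V * (yin - yeq α b)) / n₂)
    ≤ (8 * α * V / n₁ + 2 * L / n₂) * ((eOut a) ^ 2 + (eOut b) ^ 2) := by
  obtain ⟨hxin0, hxin1⟩ := hxin
  obtain ⟨hyin0, hyin1⟩ := hyin
  set ea := eOut a with hea
  set eb := eOut b with heb
  have hca := eOut_cases a
  have hcb := eOut_cases b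
  rw [← hea] at hca
  rw [← heb] at hcb
  set pa : ℝ := a - ea with hpa
  set pb : ℝ := b - eb with hpb
  clear_value ea eb pa pb
  have hpa01 : 0 ≤ pa ∧ pa ≤ 1 := by
    rcases hca with ⟨h, he⟩ | ⟨h0, h1, he⟩ | ⟨h, he⟩ <;> rw [hpa, he] <;>
      constructor <;> linarith
  have hpb01 : 0 ≤ pb ∧ pb ≤ 1 := by
    rcases hcb with ⟨h, he⟩ | ⟨h0, h1, he⟩ | ⟨h, he⟩ <;> rw [hpb, he] <;>
      constructor <;> linarith
  have hδ : (0:ℝ) < (2 * (α - 1))⁻¹ := by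
    have hα1 : (0:ℝ) < α - 1 := by linarith
    positivity
  have hpaδ : -(2 * (α - 1))⁻¹ ≤ pa := by linarith [hpa01.1]
  have hpbδ : -(2 * (α - 1))⁻¹ ≤ pb := by linarith [hpb01.1]
  have h0δ : -(2 * (α - 1))⁻¹ ≤ (0:ℝ) := by linarith
  have h1δ : -(2 * (α - 1))⁻¹ ≤ (1:ℝ) := by linarith
  -- the six sign facts
  have h1 : ea * (xin - pa) ≤ 0 := by
    rcases hca with ⟨h, he⟩ | ⟨h0, h1, he⟩ | ⟨h, he⟩ <;> rw [hpa, he] <;> nlinarith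
  have h2 : ea * (yeq α pb - yeq α pa) ≤ 0 := by
    rcases hca with ⟨h, he⟩ | ⟨h0, h1, he⟩ | ⟨h, he⟩
    · have hpa0 : pa = 0 := by rw [hpa, he]; ring
      rw [hpa0, yeq_zero]
      have hmono := yeq_mono hα h0δ hpbδ hpb01.1
      rw [yeq_zero] at hmono
      nlinarith [mul_nonneg (by linarith : (0:ℝ) ≤ -ea) hmono]
    · rw [he]; ring_nf; simp
    · have hpa1 : pa = 1 := by rw [hpa, he]; ring
      rw [hpa1, yeq_one hα]
      have h' := yeq_mono hα hpbδ h1δ hpb01.2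
      rw [yeq_one hα] at h'
      nlinarith [mul_nonneg (by linarith : (0:ℝ) ≤ ea) (by linarith : (0:ℝ) ≤ 1 - yeq α pb)]
  have h3 : ea * (yeq α pa - yeq α a) ≤ 0 := by
    rcases hca with ⟨h, he⟩ | ⟨h0, h1, he⟩ | ⟨h, he⟩
    · have hap : a ≤ pa := by rw [hpa, he]; linarith
      have hmono := yeq_mono hα ha hpaδ hap
      nlinarith [mul_nonneg (by linarith : (0:ℝ) ≤ -ea) (by linarith : (0:ℝ) ≤ yeq α pa - yeq α a)]
    · rw [he]; ring_nf; simp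
    · have hap : pa ≤ a := by rw [hpa, he]; linarith
      have hmono := yeq_mono hα hpaδ ha hap
      nlinarith [mul_nonneg (by linarith : (0:ℝ) ≤ ea) (by linarith : (0:ℝ) ≤ yeq α a - yeq α pa)]
  have h4 : ea * (yeq α b - yeq α pb) ≤ 4 * α * (|ea| * |eb|) := by
    have hlip := yeq_lip hα hb hpbδ
    have hbpb : b - pb = eb := by rw [hpb]; ring
    rw [hbpb] at hlip
    calc ea * (yeq α b - yeq α pb) ≤ |ea * (yeq α b - yeq α pb)| := le_abs_self _
      _ = |ea| * |yeq α b - yeq α pb| := abs_mul _ _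
      _ ≤ |ea| * (4 * α * |eb|) := mul_le_mul_of_nonneg_left hlip (abs_nonneg _)
      _ = 4 * α * (|ea| * |eb|) := by ring
  have h5 : eb * (pa - pb) ≤ 0 := by
    rcases hcb with ⟨h, he⟩ | ⟨h0, h1, he⟩ | ⟨h, he⟩
    · have hpb0 : pb = 0 := by rw [hpb, he]; ring
      rw [hpb0]
      nlinarith [mul_nonneg (by linarith : (0:ℝ) ≤ -eb) hpa01.1]
    · rw [he]; ring_nf; simp
    · have hpb1 : pb = 1 := by rw [hpb, he]; ring
      rw [hpb1]
      nlinarith [mul_nonneg (by linarith : (0:ℝ) ≤ eb) (by linarith [hpa01.2] : (0:ℝ) ≤ 1 - pa)]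
  have h6 : eb * (yin - yeq α pb) ≤ 0 := by
    rcases hcb with ⟨h, he⟩ | ⟨h0, h1, he⟩ | ⟨h, he⟩
    · have hpb0 : pb = 0 := by rw [hpb, he]; ring
      rw [hpb0, yeq_zero]
      nlinarith [mul_nonneg (by linarith : (0:ℝ) ≤ -eb) hyin0]
    · rw [he]; ring_nf; simp
    · have hpb1 : pb = 1 := by rw [hpb, he]; ring
      rw [hpb1, yeq_one hα]
      nlinarith [mul_nonneg (by linarith : (0:ℝ) ≤ eb) (by linarith : (0:ℝ) ≤ 1 - yin)]
  have h7 : eb * (yeq α pb - yeq α b) ≤ 0 := by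
    rcases hcb with ⟨h, he⟩ | ⟨h0, h1, he⟩ | ⟨h, he⟩
    · have hbp : b ≤ pb := by rw [hpb, he]; linarith
      have hmono := yeq_mono hα hb hpbδ hbp
      nlinarith [mul_nonneg (by linarith : (0:ℝ) ≤ -eb) (by linarith : (0:ℝ) ≤ yeq α pb - yeq α b)]
    · rw [he]; ring_nf; simp
    · have hbp : pb ≤ b := by rw [hpb, he]; linarith
      have hmono := yeq_mono hα hpbδ hb hbp
      nlinarith [mul_nonneg (by linarith : (0:ℝ) ≤ eb) (by linarith : (0:ℝ) ≤ yeq α b - yeq α pb)]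
  have h8 : ea * eb ≤ |ea| * |eb| := by
    rw [← abs_mul]; exact le_abs_self _
  set m : ℝ := |ea| * |eb| with hm
  have hmq : m ≤ ea ^ 2 + eb ^ 2 := by
    nlinarith [sq_nonneg (|ea| - |eb|), sq_abs ea, sq_abs eb, abs_nonneg ea, abs_nonneg eb,
      mul_nonneg (abs_nonneg ea) (abs_nonneg eb)]
  -- bound the two bracketed terms
  have T1 : (L * (xin - a) + V * (yeq α b - yeq α a)) * ea ≤ 4 * α * V * m := by
    have expand : (L * (xin - a) + V * (yeq α b - yeq α a)) * ea =
        L * (ea * (xin - pa)) - L * ea ^ 2 + V * (ea * (yeq α b - yeq α pb))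
          + V * (ea * (yeq α pb - yeq α pa)) + V * (ea * (yeq α pa - yeq α a)) := by
      rw [hpa]; ring
    rw [expand]
    have b1 : L * (ea * (xin - pa)) ≤ 0 := mul_nonpos_of_nonneg_of_nonpos (le_of_lt hL) h1
    have b2 : V * (ea * (yeq α b - yeq α pb)) ≤ V * (4 * α * m) :=
      mul_le_mul_of_nonneg_left h4 (le_of_lt hV)
    have b3 : V * (ea * (yeq α pb - yeq α pa)) ≤ 0 := mul_nonpos_of_nonneg_of_nonpos (le_of_lt hV) h2
    have b4 : V * (ea * (yeq α pa - yeq α a)) ≤ 0 := mul_nonpos_of_nonneg_of_nonpos (le_of_lt hV) h3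
    nlinarith [sq_nonneg ea, mul_pos hL (mul_pos hV hV)]
  have T2 : (L * (a - b) + V * (yin - yeq α b)) * eb ≤ L * m := by
    have expand : (L * (a - b) + V * (yin - yeq α b)) * eb =
        L * (ea * eb) + L * (eb * (pa - pb)) - L * eb ^ 2
          + V * (eb * (yin - yeq α pb)) + V * (eb * (yeq α pb - yeq α b)) := by
      rw [hpa, hpb]; ring
    rw [expand]
    have b1 : L * (ea * eb) ≤ L * m := mul_le_mul_of_nonneg_left h8 (le_of_lt hL)
    have b2 : L * (eb * (pa - pb)) ≤ 0 := mul_nonpos_of_nonneg_of_nonpos (le_of_lt hL) h5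
    have b3 : V * (eb * (yin - yeq α pb)) ≤ 0 := mul_nonpos_of_nonneg_of_nonpos (le_of_lt hV) h6
    have b4 : V * (eb * (yeq α pb - yeq α b)) ≤ 0 := mul_nonpos_of_nonneg_of_nonpos (le_of_lt hV) h7
    nlinarith [sq_nonneg eb, mul_pos hL (mul_pos hV hV)]
  -- combine
  have hrw : 2 * ea * ((L * (xin - a) + V * (yeq α b - yeq α a)) / n₁)
      + 2 * eb * ((L * (a - b) + V * (yin - yeq α b)) / n₂)
      = (2 / n₁) * ((L * (xin - a) + V * (yeq α b - yeq α a)) * ea)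
        + (2 / n₂) * ((L * (a - b) + V * (yin - yeq α b)) * eb) := by
    field_simp

  rw [hrw]
  have c1 : (0:ℝ) ≤ 2 / n₁ := div_nonneg (by norm_num) hn₁.le
  have c2 : (0:ℝ) ≤ 2 / n₂ := div_nonneg (by norm_num) hn₂.le
  have d1 : (2 / n₁) * ((L * (xin - a) + V * (yeq α b - yeq α a)) * ea)
      ≤ (2 / n₁) * (4 * α * V * m) := mul_le_mul_of_nonneg_left T1 c1
  have d2 : (2 / n₂) * ((L * (a - b) + V * (yin - yeq α b)) * eb)
      ≤ (2 / n₂) * (L * m) := mul_le_mul_of_nonneg_left T2 c2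
  have e1 : (2 / n₁) * (4 * α * V * m) = (8 * α * V / n₁) * m := by ring
  have e2 : (2 / n₂) * (L * m) = (2 * L / n₂) * m := by ring
  have f1 : (8 * α * V / n₁) * m ≤ (8 * α * V / n₁) * (ea ^ 2 + eb ^ 2) :=
    mul_le_mul_of_nonneg_left hmq (div_nonneg (by nlinarith : (0:ℝ) ≤ 8 * α * V) hn₁.le)
  have f2 : (2 * L / n₂) * m ≤ (2 * L / n₂) * (ea ^ 2 + eb ^ 2) :=
    mul_le_mul_of_nonneg_left hmq (div_nonneg (by nlinarith : (0:ℝ) ≤ 2 * L) hn₂.le)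
  linarith

lemma eOut_sq_eq_zero_iff {x : ℝ} : eOut x = 0 ↔ x ∈ Set.Icc (0:ℝ) 1 := by
  constructor
  · intro h
    rcases eOut_cases x with ⟨h1, he⟩ | ⟨h0, h1, _⟩ | ⟨h1, he⟩
    · rw [he] at h; constructor <;> simp [h]
    · exact ⟨h0, h1⟩
    · rw [he] at h; constructor <;> [linarith; linarith]
  · rintro ⟨h0, h1⟩
    rcases eOut_cases x with ⟨h, he⟩ | ⟨_, _, he⟩ | ⟨h, he⟩ <;> rw [he] <;> linarith

section Main

variable {α n₁ n₂ L V xin yin : ℝ} {x₁ x₂ : ℝ → ℝ}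

/-- On any interval `[0, T]` where both components stay above `-δ`, the box is invariant. -/
lemma box_on (hα : 1 < α)
    (hn₁ : 0 < n₁) (hn₂ : 0 < n₂) (hL : 0 < L) (hV : 0 < V)
    (hxin : xin ∈ Set.Icc (0:ℝ) 1) (hyin : yin ∈ Set.Icc (0:ℝ) 1)
    (hx₁ : ∀ t, HasDerivAt x₁
      ((L * (xin - x₁ t) + V * (yeq α (x₂ t) - yeq α (x₁ t))) / n₁) t)
    (hx₂ : ∀ t, HasDerivAt x₂
      ((L * (x₁ t - x₂ t) + V * (yin - yeq α (x₂ t))) / n₂) t)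
    (h0 : x₁ 0 ∈ Set.Icc (0:ℝ) 1 ∧ x₂ 0 ∈ Set.Icc (0:ℝ) 1)
    (T : ℝ) (hT : 0 ≤ T)
    (hsafe : ∀ s ∈ Icc (0:ℝ) T, -(2 * (α - 1))⁻¹ ≤ x₁ s ∧ -(2 * (α - 1))⁻¹ ≤ x₂ s) :
    ∀ s ∈ Icc (0:ℝ) T, x₁ s ∈ Set.Icc (0:ℝ) 1 ∧ x₂ s ∈ Set.Icc (0:ℝ) 1 := by
  have hqd : ∀ x : ℝ, HasDerivAt (fun y => (eOut y) ^ 2) (2 * eOut x) x := by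
    intro x
    have heq : (fun y : ℝ => (max (y - 1) 0) ^ 2 + (max (-y) 0) ^ 2)
        = fun y => (eOut y) ^ 2 := funext fun y => qOut_eq y
    exact heq ▸ hasDerivAt_qOut x
  have hfd : ∀ s : ℝ, HasDerivAt (fun s => (eOut (x₁ s)) ^ 2 + (eOut (x₂ s)) ^ 2)
      (2 * eOut (x₁ s) * ((L * (xin - x₁ s) + V * (yeq α (x₂ s) - yeq α (x₁ s))) / n₁)
        + 2 * eOut (x₂ s) * ((L * (x₁ s - x₂ s) + V * (yin - yeq α (x₂ s))) / n₂)) s := by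
    intro s
    exact ((hqd (x₁ s)).comp s (hx₁ s)).add ((hqd (x₂ s)).comp s (hx₂ s))
  have hbound : ∀ s ∈ Ico (0:ℝ) T,
      2 * eOut (x₁ s) * ((L * (xin - x₁ s) + V * (yeq α (x₂ s) - yeq α (x₁ s))) / n₁)
        + 2 * eOut (x₂ s) * ((L * (x₁ s - x₂ s) + V * (yin - yeq α (x₂ s))) / n₂)
      ≤ (8 * α * V / n₁ + 2 * L / n₂) * ((eOut (x₁ s)) ^ 2 + (eOut (x₂ s)) ^ 2) + 0 := by
    intro s hs
    obtain ⟨hs1, hs2⟩ := hsafe s ⟨hs.1, le_of_lt hs.2⟩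
    rw [add_zero]
    exact key_ineq α n₁ n₂ L V xin yin (x₁ s) (x₂ s) hα hn₁ hn₂ hL hV hxin hyin hs1 hs2
  have hf0 : (eOut (x₁ 0)) ^ 2 + (eOut (x₂ 0)) ^ 2 ≤ 0 := by
    rw [eOut_sq_eq_zero_iff.2 h0.1, eOut_sq_eq_zero_iff.2 h0.2]
    norm_num
  have hcont : ContinuousOn (fun s => (eOut (x₁ s)) ^ 2 + (eOut (x₂ s)) ^ 2) (Icc 0 T) := by
    apply Continuous.continuousOn
    rw [continuous_iff_continuousAt]
    exact fun s => (hfd s).continuousAt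
  have hliminf : ∀ s ∈ Ico (0:ℝ) T, ∀ r,
      2 * eOut (x₁ s) * ((L * (xin - x₁ s) + V * (yeq α (x₂ s) - yeq α (x₁ s))) / n₁)
        + 2 * eOut (x₂ s) * ((L * (x₁ s - x₂ s) + V * (yin - yeq α (x₂ s))) / n₂) < r →
      ∃ᶠ z in nhdsWithin s (Ioi s), (z - s)⁻¹ *
        ((fun s => (eOut (x₁ s)) ^ 2 + (eOut (x₂ s)) ^ 2) z
          - (fun s => (eOut (x₁ s)) ^ 2 + (eOut (x₂ s)) ^ 2) s) < r := by
    intro s _ r hr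
    have := ((hfd s).hasDerivWithinAt (s := Ici s)).liminf_right_slope_le hr
    apply this.mono
    intro z hz
    rwa [slope_def_field, div_eq_inv_mul] at hz
  have hgron := le_gronwallBound_of_liminf_deriv_right_le hcont hliminf hf0 hbound
  intro s hs
  have hfs := hgron s hs
  rw [gronwallBound_ε0_δ0] at hfs
  have hq1 : 0 ≤ (eOut (x₁ s)) ^ 2 := sq_nonneg _
  have hq2 : 0 ≤ (eOut (x₂ s)) ^ 2 := sq_nonneg _
  have e1 : eOut (x₁ s) = 0 := by nlinarith
  have e2 : eOut (x₂ s) = 0 := by nlinarith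
  exact ⟨eOut_sq_eq_zero_iff.1 e1, eOut_sq_eq_zero_iff.1 e2⟩

end Main

theorem two_tray_invariance (α n₁ n₂ L V xin yin : ℝ) (hα : 1 < α)
    (hn₁ : 0 < n₁) (hn₂ : 0 < n₂) (hL : 0 < L) (hV : 0 < V)
    (hxin : xin ∈ Set.Icc (0:ℝ) 1) (hyin : yin ∈ Set.Icc (0:ℝ) 1)
    (x₁ x₂ : ℝ → ℝ)
    (hx₁ : ∀ t, HasDerivAt x₁
      ((L * (xin - x₁ t) + V * (yeq α (x₂ t) - yeq α (x₁ t))) / n₁) t)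
    (hx₂ : ∀ t, HasDerivAt x₂
      ((L * (x₁ t - x₂ t) + V * (yin - yeq α (x₂ t))) / n₂) t)
    (h0 : x₁ 0 ∈ Set.Icc (0:ℝ) 1 ∧ x₂ 0 ∈ Set.Icc (0:ℝ) 1) :
    ∀ t ≥ (0:ℝ), x₁ t ∈ Set.Icc (0:ℝ) 1 ∧ x₂ t ∈ Set.Icc (0:ℝ) 1 := by
  intro t ht
  have hδ : (0:ℝ) < (2 * (α - 1))⁻¹ := by
    have hα1 : (0:ℝ) < α - 1 := by linarith
    positivity
  set δ : ℝ := (2 * (α - 1))⁻¹ with hδdef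
  have hc₁ : Continuous x₁ := by
    have : Differentiable ℝ x₁ := fun s => (hx₁ s).differentiableAt
    exact this.continuous
  have hc₂ : Continuous x₂ := by
    have : Differentiable ℝ x₂ := fun s => (hx₂ s).differentiableAt
    exact this.continuous
  set S : Set ℝ := {T | T ∈ Set.Icc 0 t ∧ ∀ s ∈ Set.Icc (0:ℝ) T, -δ ≤ x₁ s ∧ -δ ≤ x₂ s} with hS
  have h0S : (0:ℝ) ∈ S := by
    refine ⟨⟨le_refl 0, ht⟩, ?_⟩
    intro s hs
    have hs0 : s = 0 := le_antisymm hs.2 hs.1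
    rw [hs0]
    exact ⟨by linarith [h0.1.1], by linarith [h0.2.1]⟩
  have hSne : S.Nonempty := ⟨0, h0S⟩
  have hSbdd : BddAbove S := ⟨t, fun T hT => hT.1.2⟩
  set T₀ : ℝ := sSup S with hT₀def
  have hT₀0 : 0 ≤ T₀ := le_csSup hSbdd h0S
  have hT₀t : T₀ ≤ t := csSup_le hSne fun T hT => hT.1.2
  -- T₀ ∈ S
  have hT₀S : T₀ ∈ S := by
    refine ⟨⟨hT₀0, hT₀t⟩, ?_⟩
    intro s hs
    rcases eq_or_lt_of_le hs.2 with heq | hlt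
    · -- s = T₀ : use closedness
      rcases eq_or_lt_of_le hT₀0 with h0T | h0T
      · rw [heq, ← h0T]
        exact h0S.2 0 ⟨le_refl 0, le_refl 0⟩
      · have hC : IsClosed {u : ℝ | -δ ≤ x₁ u ∧ -δ ≤ x₂ u} := by
          apply IsClosed.inter
          · exact isClosed_le continuous_const hc₁
          · exact isClosed_le continuous_const hc₂
        have hsub : Ico (0:ℝ) T₀ ⊆ {u : ℝ | -δ ≤ x₁ u ∧ -δ ≤ x₂ u} := by
          intro u hu
          obtain ⟨T, hTS, hTu⟩ := exists_lt_of_lt_csSup hSne hu.2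
          exact hTS.2 u ⟨hu.1, le_of_lt hTu⟩
        have : T₀ ∈ closure (Ico (0:ℝ) T₀) := by
          rw [closure_Ico (ne_of_lt h0T)]
          exact ⟨hT₀0, le_refl _⟩
        have := closure_mono hsub this
        rw [hC.closure_eq] at this
        rw [heq]
        exact this
    · obtain ⟨T, hTS, hTu⟩ := exists_lt_of_lt_csSup hSne hlt
      exact hTS.2 s ⟨hs.1, le_of_lt hTu⟩
  have hbox : ∀ s ∈ Set.Icc (0:ℝ) T₀, x₁ s ∈ Set.Icc (0:ℝ) 1 ∧ x₂ s ∈ Set.Icc (0:ℝ) 1 :=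
    box_on hα hn₁ hn₂ hL hV hxin hyin hx₁ hx₂ h0 T₀ hT₀0 hT₀S.2
  rcases eq_or_lt_of_le hT₀t with heq | hlt
  · exact heq ▸ hbox T₀ ⟨hT₀0, le_refl _⟩
  · -- contradiction : can extend beyond T₀
    exfalso
    have hU : IsOpen {u : ℝ | -δ < x₁ u ∧ -δ < x₂ u} := by
      apply IsOpen.inter
      · exact isOpen_lt continuous_const hc₁
      · exact isOpen_lt continuous_const hc₂
    have hT₀U : T₀ ∈ {u : ℝ | -δ < x₁ u ∧ -δ < x₂ u} := by
      obtain ⟨hb1, hb2⟩ := hbox T₀ ⟨hT₀0, le_refl _⟩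
      exact ⟨by linarith [hb1.1], by linarith [hb2.1]⟩
    obtain ⟨ε, hε, hball⟩ := Metric.isOpen_iff.1 hU T₀ hT₀U
    set T' : ℝ := min t (T₀ + ε / 2) with hT'def
    have hT'gt : T₀ < T' := lt_min hlt (by linarith)
    have hT'S : T' ∈ S := by
      refine ⟨⟨by linarith, min_le_left _ _⟩, ?_⟩
      intro s hs
      rcases le_or_gt s T₀ with h | h
      · exact hT₀S.2 s ⟨hs.1, h⟩
      · have hsball : s ∈ Metric.ball T₀ ε := by
          rw [Metric.mem_ball, Real.dist_eq, abs_of_pos (by linarith)]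
          have : s ≤ T₀ + ε / 2 := le_trans hs.2 (min_le_right _ _)
          linarith
        have := hball hsball
        exact ⟨le_of_lt this.1, le_of_lt this.2⟩
    have := le_csSup hSbdd hT'S
    linarith
end
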